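/- If a POVM {M_a} admits a dual frame {M̃_a} with all M̃_a positive semidefinite, then in general this forces strong constraints; specifically, prove: for the Pauli-6 POVM on ℂ², the canonical dual frame (obtained via the Moore–Penrose pseudo-inverse of the Gram matrix) contains elements that are not positive semidefinite. -/

import Mathlib

open Matrix
open scoped ComplexOrder

noncomputable def upX : Fin 2 → ℂ := ![(1 : ℂ)/Real.sqrt 2, (1 : ℂ)/Real.sqrt 2]
noncomputable def dnX : Fin 2 → ℂ := ![(1 : ℂ)/Real.sqrt 2, -((1 : ℂ)/Real.sqrt 2)]
noncomputable def upY : Fin 2 → ℂ := ![(1 : ℂ)/Real.sqrt 2, Complex.I/Real.sqrt 2]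
noncomputable def dnY : Fin 2 → ℂ := ![(1 : ℂ)/Real.sqrt 2, -(Complex.I/Real.sqrt 2)]
noncomputable def upZ : Fin 2 → ℂ := ![1, 0]
noncomputable def dnZ : Fin 2 → ℂ := ![0, 1]

noncomputable def pauli6 : Fin 6 → Matrix (Fin 2) (Fin 2) ℂ :=
  ![ (1/3 : ℂ) • vecMulVec upX (star upX),
     (1/3 : ℂ) • vecMulVec dnX (star dnX),
     (1/3 : ℂ) • vecMulVec upY (star upY),
     (1/3 : ℂ) • vecMulVec dnY (star dnY),
     (1/3 : ℂ) • vecMulVec upZ (star upZ),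
     (1/3 : ℂ) • vecMulVec dnZ (star dnZ) ]

/-- The Gram matrix of the Pauli-6 POVM (its entries are real). -/
noncomputable def pauli6Gram : Matrix (Fin 6) (Fin 6) ℝ :=
  fun a b => ((pauli6 a * pauli6 b).trace).re

/-! ### Auxiliary material -/

@[simp] lemma cons_val_five' {α : Type*} {m : ℕ} (x : α) (u : Fin (m+5) → α) :
    Matrix.vecCons x u 5
      = Matrix.vecHead (Matrix.vecTail (Matrix.vecTail (Matrix.vecTail (Matrix.vecTail u)))) :=
  rfl

noncomputable def G0 : Matrix (Fin 6) (Fin 6) ℝ :=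
  !![1/9, 0, 1/18, 1/18, 1/18, 1/18;
     0, 1/9, 1/18, 1/18, 1/18, 1/18;
     1/18, 1/18, 1/9, 0, 1/18, 1/18;
     1/18, 1/18, 0, 1/9, 1/18, 1/18;
     1/18, 1/18, 1/18, 1/18, 1/9, 0;
     1/18, 1/18, 1/18, 1/18, 0, 1/9]

noncomputable def Tplus : Matrix (Fin 6) (Fin 6) ℝ :=
  !![5, -4, 1/2, 1/2, 1/2, 1/2;
     -4, 5, 1/2, 1/2, 1/2, 1/2;
     1/2, 1/2, 5, -4, 1/2, 1/2;
     1/2, 1/2, -4, 5, 1/2, 1/2;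
     1/2, 1/2, 1/2, 1/2, 5, -4;
     1/2, 1/2, 1/2, 1/2, -4, 5]

noncomputable def S0 : Matrix (Fin 6) (Fin 6) ℝ :=
  !![2/3, -1/3, 1/6, 1/6, 1/6, 1/6;
     -1/3, 2/3, 1/6, 1/6, 1/6, 1/6;
     1/6, 1/6, 2/3, -1/3, 1/6, 1/6;
     1/6, 1/6, -1/3, 2/3, 1/6, 1/6;
     1/6, 1/6, 1/6, 1/6, 2/3, -1/3;
     1/6, 1/6, 1/6, 1/6, -1/3, 2/3]

set_option maxHeartbeats 2000000 in
lemma gram_eq : pauli6Gram = G0 := by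
  have h : Real.sqrt 2 * Real.sqrt 2 = 2 := Real.mul_self_sqrt (by norm_num)
  ext a b
  fin_cases a <;> fin_cases b <;>
    simp [pauli6Gram, pauli6, G0, trace, Matrix.mul_apply, vecMulVec,
      upX, dnX, upY, dnY, upZ, dnZ, Fin.sum_univ_two, Complex.ext_iff, div_eq_mul_inv,
      Matrix.of_apply, Matrix.head_cons, Matrix.tail_cons, Matrix.head_fin_const,
      Matrix.vecHead, Matrix.vecTail] <;>
    nlinarith [h]

set_option maxHeartbeats 2000000 in
lemma GT_eq : G0 * Tplus = S0 := by
  ext i j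
  fin_cases i <;> fin_cases j <;>
    · simp [G0, Tplus, S0, Matrix.mul_apply, Fin.sum_univ_six, Matrix.vecHead, Matrix.vecTail]
      norm_num

set_option maxHeartbeats 2000000 in
lemma TG_eq : Tplus * G0 = S0 := by
  ext i j
  fin_cases i <;> fin_cases j <;>
    · simp [G0, Tplus, S0, Matrix.mul_apply, Fin.sum_univ_six, Matrix.vecHead, Matrix.vecTail]
      norm_num

set_option maxHeartbeats 2000000 in
lemma SG_eq : S0 * G0 = G0 := by
  ext i j
  fin_cases i <;> fin_cases j <;>
    · simp [G0, S0, Matrix.mul_apply, Fin.sum_univ_six, Matrix.vecHead, Matrix.vecTail]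
      norm_num

set_option maxHeartbeats 2000000 in
lemma ST_eq : S0 * Tplus = Tplus := by
  ext i j
  fin_cases i <;> fin_cases j <;>
    · simp [Tplus, S0, Matrix.mul_apply, Fin.sum_univ_six, Matrix.vecHead, Matrix.vecTail]
      norm_num

lemma S0_symm : S0ᵀ = S0 := by
  ext i j
  fin_cases i <;> fin_cases j <;> simp [S0, Matrix.vecHead, Matrix.vecTail]

lemma Tplus_e1 : G0 * Tplus * G0 = G0 := by rw [GT_eq, SG_eq]
lemma Tplus_e2 : Tplus * G0 * Tplus = Tplus := by rw [TG_eq, ST_eq]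
lemma Tplus_e3 : (G0 * Tplus)ᵀ = G0 * Tplus := by rw [GT_eq, S0_symm]
lemma Tplus_e4 : (Tplus * G0)ᵀ = Tplus * G0 := by rw [TG_eq, S0_symm]

/-- Uniqueness of the Moore–Penrose pseudo-inverse. -/
lemma mp_unique {n : ℕ} (G X Y : Matrix (Fin n) (Fin n) ℝ)
    (hX1 : G * X * G = G) (hX2 : X * G * X = X)
    (hX3 : (G * X)ᵀ = G * X) (hX4 : (X * G)ᵀ = X * G)
    (hY1 : G * Y * G = G) (_hY2 : Y * G * Y = Y)
    (hY3 : (G * Y)ᵀ = G * Y) (hY4 : (Y * G)ᵀ = Y * G) :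
    X = Y := by
  have hGX : G * X = G * Y := by
    calc G * X = (G * X)ᵀ := hX3.symm
    _ = Xᵀ * Gᵀ := transpose_mul _ _
    _ = Xᵀ * (G * Y * G)ᵀ := by rw [hY1]
    _ = Xᵀ * (Gᵀ * (G * Y)ᵀ) := by rw [transpose_mul]
    _ = (Xᵀ * Gᵀ) * (G * Y)ᵀ := by rw [mul_assoc]
    _ = (G * X)ᵀ * (G * Y) := by rw [← transpose_mul, hY3]
    _ = (G * X) * (G * Y) := by rw [hX3]
    _ = (G * X * G) * Y := by simp only [mul_assoc]
    _ = G * Y := by rw [hX1]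
  have hXG : X * G = Y * G := by
    calc X * G = (X * G)ᵀ := hX4.symm
    _ = Gᵀ * Xᵀ := transpose_mul _ _
    _ = (G * Y * G)ᵀ * Xᵀ := by rw [hY1]
    _ = (Y * G)ᵀ * (Gᵀ * Xᵀ) := by simp only [transpose_mul, mul_assoc]
    _ = (Y * G) * (X * G)ᵀ := by rw [hY4, ← transpose_mul]
    _ = (Y * G) * (X * G) := by rw [hX4]
    _ = Y * (G * X * G) := by simp only [mul_assoc]
    _ = Y * G := by rw [hX1]
  calc X = X * G * X := hX2.symm
  _ = (Y * G) * X := by rw [hXG]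
  _ = Y * (G * X) := mul_assoc _ _ _
  _ = Y * (G * Y) := by rw [hGX]
  _ = Y * G * Y := (mul_assoc _ _ _).symm
  _ = Y := _hY2

/-- The canonical dual frame of the Pauli-6 POVM, built from the Moore–Penrose
pseudo-inverse of its Gram matrix, contains elements that are not positive
semidefinite. -/
theorem stmt_9 (Tp : Matrix (Fin 6) (Fin 6) ℝ)
    (h1 : pauli6Gram * Tp * pauli6Gram = pauli6Gram)
    (h2 : Tp * pauli6Gram * Tp = Tp)
    (h3 : (pauli6Gram * Tp)ᵀ = pauli6Gram * Tp)
    (h4 : (Tp * pauli6Gram)ᵀ = Tp * pauli6Gram) :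
    ∃ a, ¬ (∑ a', (Tp a a' : ℂ) • pauli6 a').PosSemidef := by
  rw [gram_eq] at h1 h2 h3 h4
  have hTp : Tp = Tplus :=
    mp_unique G0 Tp Tplus h1 h2 h3 h4 Tplus_e1 Tplus_e2 Tplus_e3 Tplus_e4
  subst hTp
  refine ⟨4, fun hpsd => ?_⟩
  have h := hpsd.dotProduct_mulVec_nonneg ![0, 1]
  have hs : (Real.sqrt 2 : ℂ) * (Real.sqrt 2 : ℂ) = 2 := by
    rw [← Complex.ofReal_mul, Real.mul_self_sqrt (by norm_num)]; norm_num
  have hv : star ![(0:ℂ), 1] ⬝ᵥ (∑ a', ((Tplus 4 a' : ℝ) : ℂ) • pauli6 a').mulVec ![0, 1]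
      = -1 := by
    simp [dotProduct, mulVec, Matrix.sum_apply, Fin.sum_univ_six, Fin.sum_univ_two,
      pauli6, vecMulVec, upX, dnX, upY, dnY, upZ, dnZ, Tplus,
      Matrix.vecHead, Matrix.vecTail, Complex.ext_iff, div_eq_mul_inv]
    nlinarith [Real.mul_self_sqrt (show (0:ℝ) ≤ 2 by norm_num)]
  rw [hv] at h
  have := Complex.le_def.mp h
  norm_num at this
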